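/- Let τ ∈ ℂ \ ℝ be algebraic of degree 3 over ℚ and k = ℚ(τ) ⊆ ℂ. Let Γ ⊆ k² ⊆ ℂ² be an additive subgroup that is free of rank 3 and discrete in ℂ², and let π : ℂ² → ℂ be a surjective ℂ-linear map such that π(Γ) is a lattice in ℂ. Then there exists μ ∈ ℂ, μ ≠ 0, with μ·π(Γ) ⊆ ℤ + ℤ·τ; that is, the quotient elliptic curve ℂ/π(Γ) is isogenous to ℂ/(ℤ + ℤτ). -/

import Mathlib

-- auxiliary lemmas
open Module

lemma exists_nu_aux (K : Type*) [Field K] [Algebra ℚ K] [FiniteDimensional ℚ K]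
    (hK3 : finrank ℚ K = 3) (t : K) (ht : ∀ a : ℚ, a • (1:K) ≠ t)
    (u₁ u₂ : K) (hu₁ : u₁ ≠ 0) (hu₂ : u₂ ≠ 0) :
    ∃ ν : K, ν ≠ 0 ∧ (∃ a b : ℚ, u₁ * ν = a • t + b • (1:K)) ∧
      (∃ a b : ℚ, u₂ * ν = a • t + b • (1:K)) := by
  classical
  set V : Submodule ℚ K := Submodule.span ℚ {t, (1:K)} with hV
  have hli : LinearIndependent ℚ ![t, (1:K)] := by
    rw [linearIndependent_fin2]
    refine ⟨one_ne_zero, fun a ha => ?_⟩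
    exact ht a (by simpa using ha)
  have hVrank : finrank ℚ V = 2 := by
    have h := finrank_span_eq_card hli
    have hr : Set.range ![t, (1:K)] = {t, (1:K)} := by
      simp only [Matrix.range_cons, Matrix.range_empty, Set.union_empty,
        Set.union_singleton]
      exact Set.pair_comm 1 t
    rw [hr] at h
    simpa using h
  have e : ∀ u : K, u ≠ 0 → (K ≃ₗ[ℚ] K) := fun u hu =>
    (LinearEquiv.smulOfNeZero K K u hu).restrictScalars ℚ
  set e₁ : K ≃ₗ[ℚ] K := (LinearEquiv.smulOfNeZero K K u₁ hu₁).restrictScalars ℚ with he₁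
  set e₂ : K ≃ₗ[ℚ] K := (LinearEquiv.smulOfNeZero K K u₂ hu₂).restrictScalars ℚ with he₂
  set W₁ : Submodule ℚ K := V.map (e₁.symm : K →ₗ[ℚ] K) with hW₁
  set W₂ : Submodule ℚ K := V.map (e₂.symm : K →ₗ[ℚ] K) with hW₂
  have hw1 : finrank ℚ W₁ = 2 := by rw [hW₁, LinearEquiv.finrank_map_eq, hVrank]
  have hw2 : finrank ℚ W₂ = 2 := by rw [hW₂, LinearEquiv.finrank_map_eq, hVrank]
  have hsup := Submodule.finrank_sup_add_finrank_inf_eq W₁ W₂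
  have h3 : finrank ℚ (W₁ ⊔ W₂ : Submodule ℚ K) ≤ 3 := hK3 ▸ Submodule.finrank_le _
  have hpos : 0 < finrank ℚ (W₁ ⊓ W₂ : Submodule ℚ K) := by omega
  have hne : (W₁ ⊓ W₂ : Submodule ℚ K) ≠ ⊥ := by
    intro h
    rw [h, finrank_bot] at hpos
    exact lt_irrefl 0 hpos
  obtain ⟨ν, hνmem, hν0⟩ := Submodule.exists_mem_ne_zero_of_ne_bot hne
  obtain ⟨hν1, hν2⟩ := Submodule.mem_inf.mp hνmem
  have key : ∀ (u : K) (hu : u ≠ 0),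
      ν ∈ V.map (((LinearEquiv.smulOfNeZero K K u hu).restrictScalars ℚ).symm : K →ₗ[ℚ] K) →
      ∃ a b : ℚ, u * ν = a • t + b • (1:K) := by
    intro u hu hmem
    rw [Submodule.mem_map_equiv] at hmem
    simp only [LinearEquiv.symm_symm, LinearEquiv.restrictScalars_apply,
      LinearEquiv.smulOfNeZero_apply] at hmem
    obtain ⟨a, b, hab⟩ := Submodule.mem_span_pair.mp hmem
    exact ⟨a, b, by rw [hab, smul_eq_mul]⟩
  exact ⟨ν, hν0, key u₁ hu₁ hν1, key u₂ hu₂ hν2⟩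

lemma rat_den_mul (q : ℚ) : q * (q.den : ℚ) = (q.num : ℚ) := by
  have hd : (q.den : ℚ) ≠ 0 := by exact_mod_cast q.den_ne_zero
  exact (eq_div_iff hd).mp (Rat.num_div_den q).symm


/-- For a discrete rank-3 subgroup `Γ` of `ℂ²` contained in `k² = ℚ(τ)²`
with `τ ∉ ℝ` cubic over `ℚ`, every quotient elliptic curve of `ℂ²/Γ` is isogenous to
`ℂ/(ℤ + ℤτ)`. -/
theorem cubic_field_quotient_isogenous
    (τ : ℂ) (hτR : τ.im ≠ 0) (hdeg : (minpoly ℚ τ).natDegree = 3)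
    (Γ : AddSubgroup (ℂ × ℂ))
    (hΓk : ∀ γ ∈ Γ, γ.1 ∈ IntermediateField.adjoin ℚ ({τ} : Set ℂ) ∧
      γ.2 ∈ IntermediateField.adjoin ℚ ({τ} : Set ℂ))
    (hdisc : DiscreteTopology Γ) (hfree : Nonempty (Basis (Fin 3) ℤ Γ))
    (π : (ℂ × ℂ) →ₗ[ℂ] ℂ) (hπ : Function.Surjective π)
    (hld : DiscreteTopology (Γ.map π.toAddMonoidHom))
    (hlf : Nonempty (Basis (Fin 2) ℤ (Γ.map π.toAddMonoidHom))) :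
    ∃ μ : ℂ, μ ≠ 0 ∧ ∀ x ∈ Γ.map π.toAddMonoidHom,
      ∃ a b : ℤ, μ * x = (a : ℂ) + (b : ℂ) * τ := by
  classical
  set K : IntermediateField ℚ ℂ := IntermediateField.adjoin ℚ ({τ} : Set ℂ) with hKdef
  set L : AddSubgroup ℂ := Γ.map π.toAddMonoidHom with hLdef
  obtain ⟨bΓ⟩ := hfree
  obtain ⟨bL⟩ := hlf
  have hint : IsIntegral ℚ τ := by
    by_contra h
    rw [minpoly.eq_zero h] at hdeg
    simp at hdeg
  haveI : FiniteDimensional ℚ K := IntermediateField.adjoin.finiteDimensional hint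
  have hK3 : finrank ℚ K = 3 := by
    have h := IntermediateField.adjoin.finrank hint
    rw [hdeg] at h
    exact h
  -- Step A: find μ₀ ≠ 0 with μ₀ • L ⊆ K
  have hτK : τ ∈ K := IntermediateField.mem_adjoin_simple_self ℚ τ
  haveI : Module.Finite ℤ L := Module.Finite.of_basis bL
  set v : Fin 3 → L := fun i =>
    ⟨π.toAddMonoidHom (bΓ i), AddSubgroup.mem_map_of_mem _ (bΓ i).2⟩ with hvdef
  have hnotli : ¬ LinearIndependent ℤ v := by
    intro h
    have h2 := h.fintype_card_le_finrank
    rw [finrank_eq_card_basis bL] at h2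
    simp at h2
  obtain ⟨c, hcsum, i0, hci⟩ := Fintype.not_linearIndependent_iff.mp hnotli
  set γs : Γ := ∑ i, c i • bΓ i with hγs
  have hγs0 : γs ≠ 0 := by
    intro h
    exact hci (Fintype.linearIndependent_iff.mp bΓ.linearIndependent c h i0)
  have hπγs : π ((γs : ℂ × ℂ)) = 0 := by
    have h1 : (π.toAddMonoidHom.toIntLinearMap.comp Γ.subtype.toIntLinearMap) γs = 0 := by
      rw [hγs, map_sum]
      have h2 := congrArg L.subtype.toIntLinearMap hcsum
      rw [map_sum, map_zero] at h2
      simpa [hvdef] using h2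
    simpa using h1
  set u : ℂ := (γs : ℂ × ℂ).1 with hu
  set w : ℂ := (γs : ℂ × ℂ).2 with hw
  have huK : u ∈ K := (hΓk _ γs.2).1
  have hwK : w ∈ K := (hΓk _ γs.2).2
  set α : ℂ := π ((1 : ℂ), (0 : ℂ)) with hα
  set β : ℂ := π ((0 : ℂ), (1 : ℂ)) with hβ
  have hπeval : ∀ p q : ℂ, π (p, q) = p * α + q * β := by
    intro p q
    have h1 : ((p, q) : ℂ × ℂ) = p • ((1 : ℂ), (0 : ℂ)) + q • ((0 : ℂ), (1 : ℂ)) := by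
      simp [Prod.ext_iff]
    rw [h1, map_add, map_smul, map_smul, smul_eq_mul, smul_eq_mul]
  have hγseval : u * α + w * β = 0 := by
    have := hπeval u w
    rw [hu, hw, Prod.mk.eta] at this
    rw [← this, hπγs]
  have hαβ : ¬ (α = 0 ∧ β = 0) := by
    rintro ⟨h1, h2⟩
    obtain ⟨z, hz⟩ := hπ 1
    have := hπeval z.1 z.2
    rw [Prod.mk.eta, hz, h1, h2] at this
    simp at this
  have huw : ¬ (u = 0 ∧ w = 0) := by
    rintro ⟨h1, h2⟩
    apply hγs0
    have : (γs : ℂ × ℂ) = 0 := Prod.ext h1 h2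
    exact_mod_cast Subtype.ext this
  have stepA : ∃ μ₀ : ℂ, μ₀ ≠ 0 ∧ ∀ x ∈ L, μ₀ * x ∈ K := by
    by_cases hw0 : w = 0
    · have hu0 : u ≠ 0 := fun h => huw ⟨h, hw0⟩
      have hα0 : α = 0 := by
        rw [hw0, zero_mul, add_zero] at hγseval
        exact (mul_eq_zero.mp hγseval).resolve_left hu0
      have hβ0 : β ≠ 0 := fun h => hαβ ⟨hα0, h⟩
      refine ⟨β⁻¹, inv_ne_zero hβ0, ?_⟩
      rintro x ⟨γ, hγ, rfl⟩
      have heq : π.toAddMonoidHom γ = γ.1 * α + γ.2 * β := by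
        simpa [Prod.mk.eta] using hπeval γ.1 γ.2
      rw [heq, hα0]
      have : β⁻¹ * (γ.1 * 0 + γ.2 * β) = γ.2 := by field_simp; ring
      rw [this]
      exact (hΓk γ hγ).2
    · have hα0 : α ≠ 0 := by
        intro h
        apply hαβ
        refine ⟨h, ?_⟩
        rw [h, mul_zero, zero_add] at hγseval
        exact (mul_eq_zero.mp hγseval).resolve_left hw0
      refine ⟨α⁻¹, inv_ne_zero hα0, ?_⟩
      rintro x ⟨γ, hγ, rfl⟩
      have heq : π.toAddMonoidHom γ = γ.1 * α + γ.2 * β := by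
        simpa [Prod.mk.eta] using hπeval γ.1 γ.2
      rw [heq]
      have hx2 : α⁻¹ * (γ.1 * α + γ.2 * β) = γ.1 - γ.2 * (u / w) := by
        field_simp
        linear_combination γ.2 * hγseval
      rw [hx2]
      exact sub_mem (hΓk γ hγ).1 (mul_mem (hΓk γ hγ).2 (div_mem huK hwK))
  obtain ⟨μ₀, hμ₀0, hμ₀⟩ := stepA
  -- Step B
  set ω₁ : ℂ := ((bL 0 : L) : ℂ) with hω₁
  set ω₂ : ℂ := ((bL 1 : L) : ℂ) with hω₂
  have hω₁0 : ω₁ ≠ 0 := by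
    simpa [hω₁, ZeroMemClass.coe_eq_zero] using bL.ne_zero 0
  have hω₂0 : ω₂ ≠ 0 := by
    simpa [hω₂, ZeroMemClass.coe_eq_zero] using bL.ne_zero 1
  set u₁ : K := ⟨μ₀ * ω₁, hμ₀ _ (bL 0).2⟩ with hu₁def
  set u₂ : K := ⟨μ₀ * ω₂, hμ₀ _ (bL 1).2⟩ with hu₂def
  have hu₁0 : u₁ ≠ 0 := fun h =>
    (mul_ne_zero hμ₀0 hω₁0) (by simpa [hu₁def] using congrArg Subtype.val h)
  have hu₂0 : u₂ ≠ 0 := fun h =>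
    (mul_ne_zero hμ₀0 hω₂0) (by simpa [hu₂def] using congrArg Subtype.val h)
  set t : K := ⟨τ, hτK⟩ with htdef
  have hti : ∀ a : ℚ, a • (1 : K) ≠ t := by
    intro a ha
    have h1 : τ = algebraMap ℚ ℂ a := by
      have h2 := congrArg (algebraMap K ℂ) ha
      rw [Algebra.smul_def, mul_one, ← IsScalarTower.algebraMap_apply ℚ K ℂ] at h2
      exact h2.symm
    rw [h1, minpoly.eq_X_sub_C ℂ a] at hdeg
    simp at hdeg
  obtain ⟨ν, hν0, ⟨q₁, r₁, hqr₁⟩, ⟨q₂, r₂, hqr₂⟩⟩ :=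
    exists_nu_aux K hK3 t hti u₁ u₂ hu₁0 hu₂0
  -- coerce the two identities to ℂ
  have hc1 : (μ₀ * ω₁) * (ν : ℂ) = (q₁ : ℂ) * τ + (r₁ : ℂ) := by
    rw [Rat.smul_def, Rat.smul_def, mul_one] at hqr₁
    have h2 := congrArg (algebraMap K ℂ) hqr₁
    rw [map_mul, map_add, map_mul, map_ratCast, map_ratCast] at h2
    exact h2
  have hc2 : (μ₀ * ω₂) * (ν : ℂ) = (q₂ : ℂ) * τ + (r₂ : ℂ) := by
    rw [Rat.smul_def, Rat.smul_def, mul_one] at hqr₂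
    have h2 := congrArg (algebraMap K ℂ) hqr₂
    rw [map_mul, map_add, map_mul, map_ratCast, map_ratCast] at h2
    exact h2
  -- common denominator
  set D : ℤ := (q₁.den : ℤ) * r₁.den * q₂.den * r₂.den with hD
  have hD0 : (D : ℂ) ≠ 0 := by
    rw [hD]
    push_cast
    exact mul_ne_zero (mul_ne_zero (mul_ne_zero
      (Nat.cast_ne_zero.mpr q₁.den_ne_zero) (Nat.cast_ne_zero.mpr r₁.den_ne_zero))
      (Nat.cast_ne_zero.mpr q₂.den_ne_zero)) (Nat.cast_ne_zero.mpr r₂.den_ne_zero)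
  have hcast : ∀ (q : ℚ) (k : ℤ), ((q.num * k : ℤ) : ℂ) = ((q.den : ℤ) * k : ℤ) * (q : ℂ) := by
    intro q k
    have h1 : ((q.num * k : ℤ) : ℚ) = ((q.den : ℤ) * k : ℤ) * q := by
      push_cast
      linear_combination (-(k : ℚ)) * (rat_den_mul q)
    calc ((q.num * k : ℤ) : ℂ) = (((q.num * k : ℤ) : ℚ) : ℂ) := by push_cast; ring
      _ = ((((q.den : ℤ) * k : ℤ) * q : ℚ) : ℂ) := by rw [h1]
      _ = ((q.den : ℤ) * k : ℤ) * (q : ℂ) := by push_cast; ring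
  set AQ1 : ℤ := q₁.num * (r₁.den * q₂.den * r₂.den) with hAQ1
  set AR1 : ℤ := r₁.num * (q₁.den * q₂.den * r₂.den) with hAR1
  set AQ2 : ℤ := q₂.num * (q₁.den * r₁.den * r₂.den) with hAQ2
  set AR2 : ℤ := r₂.num * (q₁.den * r₁.den * q₂.den) with hAR2
  have eQ1 : (AQ1 : ℂ) = (D : ℂ) * (q₁ : ℂ) := by
    rw [hAQ1, hcast]; rw [hD]; push_cast; ring
  have eR1 : (AR1 : ℂ) = (D : ℂ) * (r₁ : ℂ) := by
    rw [hAR1, hcast]; rw [hD]; push_cast; ring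
  have eQ2 : (AQ2 : ℂ) = (D : ℂ) * (q₂ : ℂ) := by
    rw [hAQ2, hcast]; rw [hD]; push_cast; ring
  have eR2 : (AR2 : ℂ) = (D : ℂ) * (r₂ : ℂ) := by
    rw [hAR2, hcast]; rw [hD]; push_cast; ring
  -- the final μ
  have hνC : ((ν : ℂ)) ≠ 0 := by
    simpa [ZeroMemClass.coe_eq_zero] using hν0
  refine ⟨(D : ℂ) * (ν : ℂ) * μ₀, by
    exact mul_ne_zero (mul_ne_zero hD0 hνC) hμ₀0, ?_⟩
  intro x hx
  set x' : L := ⟨x, hx⟩ with hx'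
  have hrepr := bL.sum_repr x'
  rw [Fin.sum_univ_two] at hrepr
  set m : ℤ := bL.repr x' 0 with hm
  set n : ℤ := bL.repr x' 1 with hn
  have hxeq : x = (m : ℂ) * ω₁ + (n : ℂ) * ω₂ := by
    have h2 := congrArg L.subtype.toIntLinearMap hrepr
    rw [map_add, map_smul, map_smul] at h2
    have h3 : L.subtype.toIntLinearMap x' = x := rfl
    rw [h3] at h2
    rw [← h2]
    have h4 : L.subtype.toIntLinearMap (bL 0) = ω₁ := rfl
    have h5 : L.subtype.toIntLinearMap (bL 1) = ω₂ := rfl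
    rw [h4, h5, zsmul_eq_mul, zsmul_eq_mul]
  refine ⟨m * AR1 + n * AR2, m * AQ1 + n * AQ2, ?_⟩
  push_cast
  linear_combination (D : ℂ) * (ν : ℂ) * μ₀ * hxeq + (m : ℂ) * (D : ℂ) * hc1 +
    (n : ℂ) * (D : ℂ) * hc2 - (m : ℂ) * τ * eQ1 - (n : ℂ) * τ * eQ2 -
    (m : ℂ) * eR1 - (n : ℂ) * eR2
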